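/- Let p = p(n) ∈ [0,1] be a sequence of edge probabilities such that (n(1−p))⁴p² → 0 as n → ∞. Then the probability that the Erdős–Rényi random graph G(n,1−p) is 4-chordal tends to 1 as n → ∞. (Equivalently, with high probability the complement of G(n,p) has no induced 4-cycle, i.e. the edge ideal I(n,p) has linear presentation.) -/

import Mathlib

open Filter

/-- Probability weight of a given graph `G` under the Erdős–Rényi model `G(n,p)`:
each of the `n.choose 2` possible edges is present independently with probability `p`. -/
noncomputable def graphWeight (n : ℕ) (p : ℝ) (G : SimpleGraph (Fin n)) : ℝ :=
  p ^ Nat.card G.edgeSet * (1 - p) ^ (n.choose 2 - Nat.card G.edgeSet)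

/-- Probability of the event `A` under the Erdős–Rényi random graph `G(n,p)`. -/
noncomputable def erProb (n : ℕ) (p : ℝ) (A : Set (SimpleGraph (Fin n))) : ℝ :=
  ∑ G : SimpleGraph (Fin n), A.indicator (graphWeight n p) G


section ERAux
open Classical

/-- The type of potential edges on `Fin n`. -/
abbrev ET (n : ℕ) := {e : Sym2 (Fin n) // ¬ e.IsDiag}

/-- Weight of a single edge slot. -/
noncomputable def wgt (q : ℝ) (b : Bool) : ℝ := if b then q else 1 - q

/-- Indicator of the edges of a graph. -/
noncomputable def chi (n : ℕ) (G : SimpleGraph (Fin n)) (e : ET n) : Bool :=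
  decide (e.1 ∈ G.edgeSet)

noncomputable def graphEquiv (n : ℕ) : SimpleGraph (Fin n) ≃ (ET n → Bool) where
  toFun := chi n
  invFun f := SimpleGraph.fromEdgeSet {e | ∃ h : ¬ e.IsDiag, f ⟨e, h⟩ = true}
  left_inv G := by
    have hs : {e | ∃ h : ¬ e.IsDiag, chi n G ⟨e, h⟩ = true} = G.edgeSet := by
      ext e
      simp only [Set.mem_setOf_eq, chi, decide_eq_true_eq]
      exact ⟨fun ⟨h, he⟩ => he, fun he => ⟨G.not_isDiag_of_mem_edgeSet he, he⟩⟩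
    show SimpleGraph.fromEdgeSet {e | ∃ h : ¬ e.IsDiag, chi n G ⟨e, h⟩ = true} = G
    rw [hs, SimpleGraph.fromEdgeSet_edgeSet]
  right_inv f := by
    funext e
    have hmem : (e.1 ∈ ({e | ∃ h : ¬ e.IsDiag, f ⟨e, h⟩ = true} \
        {e : Sym2 (Fin n) | e.IsDiag})) ↔ f e = true := by
      constructor
      · rintro ⟨⟨h, he⟩, -⟩
        rwa [show (⟨e.1, h⟩ : ET n) = e from Subtype.ext rfl] at he
      · intro hf
        exact ⟨⟨e.2, by rwa [show (⟨e.1, e.2⟩ : ET n) = e from Subtype.ext rfl]⟩, e.2⟩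
    unfold chi
    cases hfe : f e
    · simp [hfe]
    · simp [hfe, e.2]

lemma wgt_nonneg {q : ℝ} (hq0 : 0 ≤ q) (hq1 : q ≤ 1) (b : Bool) : 0 ≤ wgt q b := by
  cases b <;> simp [wgt] <;> linarith

lemma sum_wgt (q : ℝ) : ∑ b : Bool, wgt q b = 1 := by
  simp [wgt]

lemma graphWeight_eq_prod (n : ℕ) (q : ℝ) (G : SimpleGraph (Fin n)) :
    graphWeight n q G = ∏ e : ET n, wgt q (chi n G e) := by
  have hrw : ∀ e : ET n, wgt q (chi n G e)
      = if chi n G e = true then q else 1 - q := fun e => rfl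
  simp_rw [hrw]
  rw [Finset.prod_ite, Finset.prod_const, Finset.prod_const]
  have hcard1 : Nat.card G.edgeSet
      = (Finset.univ.filter (fun e : ET n => chi n G e = true)).card := by
    have e1 : G.edgeSet ≃ {e : ET n // chi n G e = true} :=
      { toFun := fun x => ⟨⟨x.1, G.not_isDiag_of_mem_edgeSet x.2⟩, by
          simp [chi, x.2]⟩
        invFun := fun x => ⟨x.1.1, by
          have := x.2; simpa [chi] using this⟩
        left_inv := fun x => rfl
        right_inv := fun x => by ext; rfl }
    rw [Nat.card_congr e1, Nat.card_eq_fintype_card, Fintype.card_subtype]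
  have hcard2 : (Finset.univ.filter (fun e : ET n => ¬ (chi n G e = true))).card
      = n.choose 2 - (Finset.univ.filter (fun e : ET n => chi n G e = true)).card := by
    have htot := Finset.card_filter_add_card_filter_not
      (s := (Finset.univ : Finset (ET n))) (p := fun e => chi n G e = true)
    have hET : Fintype.card (ET n) = n.choose 2 := by
      rw [Sym2.card_subtype_not_diag, Fintype.card_fin]
    rw [Finset.card_univ, hET] at htot
    omega
  rw [graphWeight, hcard1, hcard2]

lemma sum_graphWeight (n : ℕ) (q : ℝ) :
    ∑ G : SimpleGraph (Fin n), graphWeight n q G = 1 := by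
  have h1 : ∑ G : SimpleGraph (Fin n), graphWeight n q G
      = ∑ f : ET n → Bool, ∏ e, wgt q (f e) := by
    rw [← Equiv.sum_comp (graphEquiv n) (fun f => ∏ e, wgt q (f e))]
    exact Finset.sum_congr rfl fun G _ => graphWeight_eq_prod n q G
  have h2 := Finset.prod_univ_sum (fun _ : ET n => (Finset.univ : Finset Bool))
    (fun _ b => wgt q b)
  rw [Fintype.piFinset_univ] at h2
  rw [h1, ← h2]
  simp_rw [sum_wgt]
  exact Finset.prod_const_one

lemma sum_cyl (n : ℕ) (q : ℝ) (S : Finset (ET n)) (g : ET n → Bool) :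
    ∑ f : ET n → Bool, (if ∀ e ∈ S, f e = g e then ∏ e, wgt q (f e) else 0)
      = ∏ e ∈ S, wgt q (g e) := by
  have key : ∀ f : ET n → Bool,
      (if ∀ e ∈ S, f e = g e then ∏ e, wgt q (f e) else 0)
        = ∏ e, (if e ∈ S then (if f e = g e then wgt q (f e) else 0) else wgt q (f e)) := by
    intro f
    by_cases hf : ∀ e ∈ S, f e = g e
    · rw [if_pos hf]
      refine Finset.prod_congr rfl fun e _ => ?_
      by_cases he : e ∈ S
      · rw [if_pos he, if_pos (hf e he)]
      · rw [if_neg he]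
    · rw [if_neg hf]
      push_neg at hf
      obtain ⟨e₀, he₀, hne⟩ := hf
      refine (Finset.prod_eq_zero (Finset.mem_univ e₀) ?_).symm
      rw [if_pos he₀, if_neg hne]
  simp_rw [key]
  have h2 := Finset.prod_univ_sum (fun _ : ET n => (Finset.univ : Finset Bool))
    (fun e b => if e ∈ S then (if b = g e then wgt q b else 0) else wgt q b)
  rw [Fintype.piFinset_univ] at h2
  rw [← h2]
  have h3 : ∀ e : ET n,
      (∑ b : Bool, if e ∈ S then (if b = g e then wgt q b else 0) else wgt q b)
        = if e ∈ S then wgt q (g e) else 1 := by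
    intro e
    by_cases he : e ∈ S
    · simp only [if_pos he]
      rw [Finset.sum_ite_eq' Finset.univ (g e) (wgt q)]
      simp
    · simp only [if_neg he]
      exact sum_wgt q
  rw [Finset.prod_congr rfl fun e _ => h3 e, Finset.prod_ite_mem, Finset.univ_inter]

end ERAux


/-- `v : ZMod k → V` describes a chordless (induced) `k`-cycle of `G`:
it is injective, consecutive vertices are adjacent, and non-consecutive
vertices are non-adjacent. -/
def IsChordlessCycleOn {V : Type} (G : SimpleGraph V) {k : ℕ} (v : ZMod k → V) : Prop :=
  Function.Injective v ∧
    (∀ i : ZMod k, G.Adj (v i) (v (i + 1))) ∧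
    ∀ i j : ZMod k, i ≠ j → j ≠ i + 1 → i ≠ j + 1 → ¬G.Adj (v i) (v j)

/-- A graph is 4-chordal if every cycle of length 4 has a chord, i.e. there is
no chordless 4-cycle. -/
def FourChordal {V : Type} (G : SimpleGraph V) : Prop :=
  ¬∃ v : ZMod 4 → V, IsChordlessCycleOn G v

/-- A graph is chordal if every cycle of length at least 4 has a chord, i.e. there is
no chordless cycle of length at least 4. -/
def Chordal {V : Type} (G : SimpleGraph V) : Prop :=
  ∀ k : ℕ, 4 ≤ k → ¬∃ v : ZMod k → V, IsChordlessCycleOn G v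

section ERMain
open Classical

lemma graphWeight_nonneg (n : ℕ) {q : ℝ} (hq0 : 0 ≤ q) (hq1 : q ≤ 1)
    (G : SimpleGraph (Fin n)) : 0 ≤ graphWeight n q G := by
  rw [graphWeight_eq_prod]
  exact Finset.prod_nonneg fun e _ => wgt_nonneg hq0 hq1 _

lemma erProb_nonneg (n : ℕ) {q : ℝ} (hq0 : 0 ≤ q) (hq1 : q ≤ 1)
    (A : Set (SimpleGraph (Fin n))) : 0 ≤ erProb n q A :=
  Finset.sum_nonneg fun G _ =>
    Set.indicator_nonneg (fun x _ => graphWeight_nonneg n hq0 hq1 x) G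

lemma erProb_cycle_le (n : ℕ) {q : ℝ} (hq0 : 0 ≤ q) (hq1 : q ≤ 1) (v : ZMod 4 → Fin n) :
    erProb n q {G | IsChordlessCycleOn G v} ≤ q ^ 4 * (1 - q) ^ 2 := by
  by_cases hv : Function.Injective v
  · have hne : ∀ i j : ZMod 4, i ≠ j → v i ≠ v j := fun i j hij h => hij (hv h)
    have d01 : v 0 ≠ v 1 := hne 0 1 (by decide)
    have d02 : v 0 ≠ v 2 := hne 0 2 (by decide)
    have d03 : v 0 ≠ v 3 := hne 0 3 (by decide)
    have d12 : v 1 ≠ v 2 := hne 1 2 (by decide)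
    have d13 : v 1 ≠ v 3 := hne 1 3 (by decide)
    have d23 : v 2 ≠ v 3 := hne 2 3 (by decide)
    have d10 := d01.symm; have d20 := d02.symm; have d30 := d03.symm
    have d21 := d12.symm; have d31 := d13.symm; have d32 := d23.symm
    set E0 : ET n := ⟨s(v 0, v 1), by simp [d01]⟩ with hE0
    set E1 : ET n := ⟨s(v 1, v 2), by simp [d12]⟩ with hE1
    set E2 : ET n := ⟨s(v 2, v 3), by simp [d23]⟩ with hE2
    set E3 : ET n := ⟨s(v 3, v 0), by simp [d30]⟩ with hE3
    set C0 : ET n := ⟨s(v 0, v 2), by simp [d02]⟩ with hC0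
    set C1 : ET n := ⟨s(v 1, v 3), by simp [d13]⟩ with hC1
    set S : Finset (ET n) := insert E0 (insert E1 (insert E2 (insert E3 (insert C0 {C1}))))
      with hS
    set g : ET n → Bool := fun e => decide (e = E0 ∨ e = E1 ∨ e = E2 ∨ e = E3) with hg
    have hm0 : E0 ∉ (insert E1 (insert E2 (insert E3 (insert C0 ({C1} : Finset (ET n)))))) := by
      simp [hE0, hE1, hE2, hE3, hC0, hC1, Sym2.eq_iff,
        d01, d02, d03, d12, d13, d23, d10, d20, d30, d21, d31, d32]
    have hm1 : E1 ∉ (insert E2 (insert E3 (insert C0 ({C1} : Finset (ET n))))) := by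
      simp [hE1, hE2, hE3, hC0, hC1, Sym2.eq_iff,
        d01, d02, d03, d12, d13, d23, d10, d20, d30, d21, d31, d32]
    have hm2 : E2 ∉ (insert E3 (insert C0 ({C1} : Finset (ET n)))) := by
      simp [hE2, hE3, hC0, hC1, Sym2.eq_iff,
        d01, d02, d03, d12, d13, d23, d10, d20, d30, d21, d31, d32]
    have hm3 : E3 ∉ (insert C0 ({C1} : Finset (ET n))) := by
      simp [hE3, hC0, hC1, Sym2.eq_iff,
        d01, d02, d03, d12, d13, d23, d10, d20, d30, d21, d31, d32]
    have hm4 : C0 ∉ ({C1} : Finset (ET n)) := by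
      simp [hC0, hC1, Sym2.eq_iff,
        d01, d02, d03, d12, d13, d23, d10, d20, d30, d21, d31, d32]
    have gE0 : g E0 = true := by simp [hg]
    have gE1 : g E1 = true := by simp [hg]
    have gE2 : g E2 = true := by simp [hg]
    have gE3 : g E3 = true := by simp [hg]
    have gC0 : g C0 = false := by
      simp [hg, hE0, hE1, hE2, hE3, hC0, Sym2.eq_iff,
        d01, d02, d03, d12, d13, d23, d10, d20, d30, d21, d31, d32]
    have gC1 : g C1 = false := by
      simp [hg, hE0, hE1, hE2, hE3, hC1, Sym2.eq_iff,
        d01, d02, d03, d12, d13, d23, d10, d20, d30, d21, d31, d32]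
    calc erProb n q {G | IsChordlessCycleOn G v}
        = ∑ G : SimpleGraph (Fin n),
            (if G ∈ {G | IsChordlessCycleOn G v} then graphWeight n q G else 0) := by
          rw [erProb]
          exact Finset.sum_congr rfl fun G _ => Set.indicator_apply _ _ _
      _ ≤ ∑ G : SimpleGraph (Fin n),
            (if ∀ e ∈ S, chi n G e = g e then ∏ e, wgt q (chi n G e) else 0) := by
          refine Finset.sum_le_sum fun G _ => ?_
          by_cases hG : G ∈ {G | IsChordlessCycleOn G v}
          · have hGc : IsChordlessCycleOn G v := hG
            have a0 : G.Adj (v 0) (v 1) := by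
              have := hGc.2.1 0; rwa [show (0 : ZMod 4) + 1 = 1 by decide] at this
            have a1 : G.Adj (v 1) (v 2) := by
              have := hGc.2.1 1; rwa [show (1 : ZMod 4) + 1 = 2 by decide] at this
            have a2 : G.Adj (v 2) (v 3) := by
              have := hGc.2.1 2; rwa [show (2 : ZMod 4) + 1 = 3 by decide] at this
            have a3 : G.Adj (v 3) (v 0) := by
              have := hGc.2.1 3; rwa [show (3 : ZMod 4) + 1 = 0 by decide] at this
            have c0 : ¬ G.Adj (v 0) (v 2) := hGc.2.2 0 2 (by decide) (by decide) (by decide)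
            have c1 : ¬ G.Adj (v 1) (v 3) := hGc.2.2 1 3 (by decide) (by decide) (by decide)
            have hcond : ∀ e ∈ S, chi n G e = g e := by
              intro e he
              rw [hS] at he
              simp only [Finset.mem_insert, Finset.mem_singleton] at he
              rcases he with rfl | rfl | rfl | rfl | rfl | rfl
              · rw [gE0]; simp [chi, hE0, SimpleGraph.mem_edgeSet, a0]
              · rw [gE1]; simp [chi, hE1, SimpleGraph.mem_edgeSet, a1]
              · rw [gE2]; simp [chi, hE2, SimpleGraph.mem_edgeSet, a2]
              · rw [gE3]; simp [chi, hE3, SimpleGraph.mem_edgeSet, a3]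
              · rw [gC0]; simp [chi, hC0, SimpleGraph.mem_edgeSet, c0]
              · rw [gC1]; simp [chi, hC1, SimpleGraph.mem_edgeSet, c1]
            rw [if_pos hG, if_pos hcond, graphWeight_eq_prod]
          · rw [if_neg hG]
            split
            · exact Finset.prod_nonneg fun e _ => wgt_nonneg hq0 hq1 _
            · exact le_refl _
      _ = ∑ f : ET n → Bool, (if ∀ e ∈ S, f e = g e then ∏ e, wgt q (f e) else 0) :=
          Equiv.sum_comp (graphEquiv n)
            (fun f => if ∀ e ∈ S, f e = g e then ∏ e, wgt q (f e) else 0)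
      _ = ∏ e ∈ S, wgt q (g e) := sum_cyl n q S g
      _ = q ^ 4 * (1 - q) ^ 2 := by
          rw [hS, Finset.prod_insert hm0, Finset.prod_insert hm1, Finset.prod_insert hm2,
            Finset.prod_insert hm3, Finset.prod_insert hm4, Finset.prod_singleton,
            gE0, gE1, gE2, gE3, gC0, gC1]
          simp only [wgt, if_pos, if_neg, Bool.false_eq_true, ite_true, ite_false]
          ring
  · have hempty : {G : SimpleGraph (Fin n) | IsChordlessCycleOn G v} = ∅ := by
      ext G; simp only [Set.mem_setOf_eq, Set.mem_empty_iff_false, iff_false]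
      exact fun hG => hv hG.1
    rw [hempty]
    have : erProb n q (∅ : Set (SimpleGraph (Fin n))) = 0 := by
      simp [erProb]
    rw [this]
    have h1 : (0:ℝ) ≤ q ^ 4 := pow_nonneg hq0 4
    have h2 : (0:ℝ) ≤ (1 - q) ^ 2 := sq_nonneg _
    exact mul_nonneg h1 h2

lemma erProb_not_fourChordal_le (n : ℕ) {q : ℝ} (hq0 : 0 ≤ q) (hq1 : q ≤ 1) :
    erProb n q {G | ¬ FourChordal G} ≤ (n : ℝ) ^ 4 * (q ^ 4 * (1 - q) ^ 2) := by
  have step1 : erProb n q {G | ¬ FourChordal G}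
      ≤ ∑ v : ZMod 4 → Fin n, erProb n q {G | IsChordlessCycleOn G v} := by
    have hpt : ∀ G : SimpleGraph (Fin n),
        Set.indicator {G | ¬ FourChordal G} (graphWeight n q) G
          ≤ ∑ v : ZMod 4 → Fin n,
              Set.indicator {G | IsChordlessCycleOn G v} (graphWeight n q) G := by
      intro G
      by_cases hG : G ∈ {G | ¬ FourChordal G}
      · obtain ⟨v₀, hv₀⟩ := not_not.mp hG
        rw [Set.indicator_of_mem hG]
        have hle := Finset.single_le_sum
          (f := fun v : ZMod 4 → Fin n =>
            Set.indicator {G | IsChordlessCycleOn G v} (graphWeight n q) G)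
          (fun v _ => Set.indicator_nonneg
            (fun x _ => graphWeight_nonneg n hq0 hq1 x) G)
          (Finset.mem_univ v₀)
        have heq : Set.indicator {G | IsChordlessCycleOn G v₀} (graphWeight n q) G
            = graphWeight n q G := Set.indicator_of_mem (show G ∈ {G | IsChordlessCycleOn G v₀} from hv₀) (graphWeight n q)
        exact le_trans heq.symm.le hle
      · rw [Set.indicator_of_notMem hG]
        exact Finset.sum_nonneg fun v _ => Set.indicator_nonneg
          (fun x _ => graphWeight_nonneg n hq0 hq1 x) G
    calc erProb n q {G | ¬ FourChordal G}
        ≤ ∑ G : SimpleGraph (Fin n), ∑ v : ZMod 4 → Fin n,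
            Set.indicator {G | IsChordlessCycleOn G v} (graphWeight n q) G :=
          Finset.sum_le_sum fun G _ => hpt G
      _ = ∑ v : ZMod 4 → Fin n, erProb n q {G | IsChordlessCycleOn G v} :=
          Finset.sum_comm
  refine step1.trans ?_
  calc ∑ v : ZMod 4 → Fin n, erProb n q {G | IsChordlessCycleOn G v}
      ≤ ∑ _v : ZMod 4 → Fin n, q ^ 4 * (1 - q) ^ 2 :=
        Finset.sum_le_sum fun v _ => erProb_cycle_le n hq0 hq1 v
    _ = (n : ℝ) ^ 4 * (q ^ 4 * (1 - q) ^ 2) := by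
        rw [Finset.sum_const, Finset.card_univ, nsmul_eq_mul]
        congr 1
        rw [Fintype.card_fun]
        push_cast
        norm_num

lemma erProb_fourChordal_eq (n : ℕ) (q : ℝ) :
    erProb n q {G | FourChordal G} = 1 - erProb n q {G | ¬ FourChordal G} := by
  have hsum : erProb n q {G | FourChordal G} + erProb n q {G | ¬ FourChordal G} = 1 := by
    rw [erProb, erProb, ← Finset.sum_add_distrib, ← sum_graphWeight n q]
    refine Finset.sum_congr rfl fun G _ => ?_
    by_cases hG : FourChordal G
    · rw [Set.indicator_of_mem (by exact hG), Set.indicator_of_notMem (by simpa using hG)]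
      ring
    · rw [Set.indicator_of_notMem (by exact hG), Set.indicator_of_mem (by exact hG)]
      ring
  linarith

end ERMain

/-- If `(n(1-p))⁴ p² → 0`, then with high probability `G(n,1-p)` is 4-chordal
(equivalently, the edge ideal `I(n,p)` has linear presentation). -/
theorem fourChordal_whp (p : ℕ → ℝ) (hp : ∀ n, p n ∈ Set.Icc (0 : ℝ) 1)
    (h : Tendsto (fun n : ℕ => ((n : ℝ) * (1 - p n)) ^ 4 * p n ^ 2) atTop (nhds 0)) :
    Tendsto (fun n : ℕ => erProb n (1 - p n) {G | FourChordal G}) atTop (nhds 1) := by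
  have hq0 : ∀ n, (0:ℝ) ≤ 1 - p n := fun n => by linarith [(hp n).2]
  have hq1 : ∀ n, (1:ℝ) - p n ≤ 1 := fun n => by linarith [(hp n).1]
  have hX0 : ∀ n, 0 ≤ erProb n (1 - p n) {G | ¬ FourChordal G} := fun n =>
    erProb_nonneg n (hq0 n) (hq1 n) _
  have hXle : ∀ n, erProb n (1 - p n) {G | ¬ FourChordal G}
      ≤ ((n : ℝ) * (1 - p n)) ^ 4 * p n ^ 2 := by
    intro n
    calc erProb n (1 - p n) {G | ¬ FourChordal G}
        ≤ (n:ℝ) ^ 4 * ((1 - p n) ^ 4 * (1 - (1 - p n)) ^ 2) :=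
          erProb_not_fourChordal_le n (hq0 n) (hq1 n)
      _ = ((n : ℝ) * (1 - p n)) ^ 4 * p n ^ 2 := by ring
  have hXto : Tendsto (fun n => erProb n (1 - p n) {G | ¬ FourChordal G}) atTop (nhds 0) :=
    squeeze_zero hX0 hXle h
  have heq : (fun n : ℕ => erProb n (1 - p n) {G | FourChordal G})
      = fun n => 1 - erProb n (1 - p n) {G | ¬ FourChordal G} :=
    funext fun n => erProb_fourChordal_eq n (1 - p n)
  rw [heq]
  simpa using tendsto_const_nhds.sub hXto
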